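/- Let μ be a finite Borel measure on a metric space X with support X, and suppose there exist countably many Lipschitz maps f_i : A_i → X with A_i ⊆ ℝ such that μ(X \ ⋃ f_i(A_i)) = 0. Then for μ-almost every x ∈ X, liminf_{r→0} μ(B(x,r))/r > 0. -/

import Mathlib

open MeasureTheory Metric Filter Set

lemma key_zero_image {X : Type*} [MetricSpace X] [MeasurableSpace X]
    (μ : Measure X) (f : ℝ → X) (A : Set ℝ) (C : ℝ) (hC : 0 < C)
    (hlip : ∀ s ∈ A, ∀ t ∈ A, dist (f s) (f t) ≤ C * dist s t)
    (E : Set ℝ) (hEA : E ⊆ A)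
    (hE : ∀ t ∈ E, liminf (fun r : ℝ => μ (ball (f t) r) / ENNReal.ofReal r)
      (nhdsWithin 0 (Ioi 0)) = 0) :
    μ (f '' E) = 0 := by
  -- reduce to bounded pieces
  have hn : ∀ n : ℕ, μ (f '' (E ∩ ball (0:ℝ) n)) = 0 := by
    intro n
    set B := E ∩ ball (0:ℝ) n with hB
    have claim : ∀ ε : ℝ, 0 < ε → μ (f '' B) ≤ ENNReal.ofReal (ε * (5*C) * (n+1)) := by
      intro ε hε
      have h5C : 0 < 5*C := by linarith
      -- choose good radii
      have hδ : ∀ t : ℝ, ∃ δ : ℝ, 0 < δ ∧ δ ≤ 1 ∧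
          (t ∈ B → μ (ball (f t) (5*C*δ)) ≤ ENNReal.ofReal (ε * (5*C*δ))) := by
        intro t
        by_cases ht : t ∈ B
        · have hli := hE t ht.1
          have hfreq : ∃ᶠ r in nhdsWithin (0:ℝ) (Ioi 0),
              μ (ball (f t) r) / ENNReal.ofReal r < ENNReal.ofReal ε := by
            exact frequently_lt_of_liminf_lt (by isBoundedDefault)
              (by rw [hli]; exact ENNReal.ofReal_pos.2 hε)
          have hev : ∀ᶠ r in nhdsWithin (0:ℝ) (Ioi 0), r ∈ Ioo (0:ℝ) (5*C) :=
            Ioo_mem_nhdsGT h5C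
          obtain ⟨r, hr1, hr2⟩ := (hfreq.and_eventually hev).exists
          refine ⟨r/(5*C), div_pos hr2.1 h5C, ?_, fun _ => ?_⟩
          · rw [div_le_one h5C]; exact hr2.2.le
          · have h5 : 5*C*(r/(5*C)) = r := by field_simp
            rw [h5]
            have hne : ENNReal.ofReal r ≠ 0 := (ENNReal.ofReal_pos.2 hr2.1).ne'
            rw [ENNReal.div_lt_iff (Or.inl hne) (Or.inl ENNReal.ofReal_ne_top)] at hr1
            calc μ (ball (f t) r) ≤ ENNReal.ofReal ε * ENNReal.ofReal r := hr1.le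
              _ = ENNReal.ofReal (ε * r) := (ENNReal.ofReal_mul hε.le).symm
        · exact ⟨1, one_pos, le_refl 1, fun h => absurd h ht⟩
      choose δ hδpos hδle hδμ using hδ
      obtain ⟨u, huB, hdisj, hcover⟩ :=
        Vitali.exists_disjoint_subfamily_covering_enlargement_closedBall B id δ 1
          (fun t _ => hδle t) 4 (by norm_num)
      have hcnt : u.Countable :=
        hdisj.countable_of_nonempty_interior
          (fun i _ => ⟨i, ball_subset_interior_closedBall (mem_ball_self (hδpos i))⟩)
      have himg : f '' B ⊆ ⋃ b ∈ u, ball (f b) (5*C*δ b) := by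
        rintro x ⟨t, ht, rfl⟩
        obtain ⟨b, hbu, hsub⟩ := hcover t ht
        have htb : t ∈ closedBall (id b) (4 * δ b) :=
          hsub (mem_closedBall_self (hδpos t).le)
        have hbB := huB hbu
        refine mem_biUnion hbu ?_
        have h1 : dist (f t) (f b) ≤ C * dist t b := hlip t (hEA ht.1) b (hEA hbB.1)
        have h2 : dist t b ≤ 4 * δ b := mem_closedBall.1 htb
        have hcd : 0 < C * δ b := mul_pos hC (hδpos b)
        have : dist (f t) (f b) < 5*C*δ b := by nlinarith [dist_nonneg (x := t) (y := b)]
        exact mem_ball.2 this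
      have hvol : ∀ b : ℝ, b ∈ u → closedBall b (δ b) ⊆ closedBall (0:ℝ) (n+1) := by
        intro b hb
        apply closedBall_subset_closedBall'
        have hbB := huB hb
        have : dist b (0:ℝ) < n := mem_ball.1 hbB.2
        linarith [hδle b]
      calc μ (f '' B) ≤ μ (⋃ b ∈ u, ball (f b) (5*C*δ b)) := measure_mono himg
        _ ≤ ∑' b : u, μ (ball (f b) (5*C*δ b)) := measure_biUnion_le μ hcnt _
        _ ≤ ∑' b : u, ENNReal.ofReal (ε * (5*C*δ b)) :=
            ENNReal.tsum_le_tsum fun b => hδμ b (huB b.2)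
        _ = ∑' b : u, ENNReal.ofReal (ε*5*C/2) * ENNReal.ofReal (2*δ b) := by
            refine tsum_congr fun b => ?_
            rw [← ENNReal.ofReal_mul (by positivity)]
            ring_nf
        _ = ENNReal.ofReal (ε*5*C/2) * ∑' b : u, ENNReal.ofReal (2*δ b) :=
            ENNReal.tsum_mul_left
        _ = ENNReal.ofReal (ε*5*C/2) * ∑' b : u, volume (closedBall (b:ℝ) (δ b)) := by
            congr 1
            exact tsum_congr fun b => (Real.volume_closedBall _ _).symm
        _ = ENNReal.ofReal (ε*5*C/2) * volume (⋃ b ∈ u, closedBall b (δ b)) := by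
            congr 1
            exact (measure_biUnion hcnt hdisj (fun b _ => measurableSet_closedBall)).symm
        _ ≤ ENNReal.ofReal (ε*5*C/2) * volume (closedBall (0:ℝ) (n+1)) := by
            gcongr
            exact iUnion₂_subset hvol
        _ = ENNReal.ofReal (ε*5*C/2) * ENNReal.ofReal (2*(n+1)) := by
            rw [Real.volume_closedBall]
        _ = ENNReal.ofReal (ε * (5*C) * (n+1)) := by
            rw [← ENNReal.ofReal_mul (by positivity)]
            ring_nf
    have h2 : ∀ ε' : ℝ, 0 < ε' → μ (f '' B) ≤ ENNReal.ofReal ε' := by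
      intro ε' hε'
      have hn1 : (0:ℝ) < (n:ℝ) + 1 := by positivity
      have := claim (ε' / ((5*C) * (n+1))) (by positivity)
      convert this using 2
      field_simp
    refine le_antisymm ?_ zero_le
    refine ENNReal.le_of_forall_pos_le_add fun ε hε _ => ?_
    rw [zero_add]
    have := h2 ε (by exact_mod_cast hε)
    simpa [ENNReal.ofReal_coe_nnreal] using this
  have hcover : f '' E ⊆ ⋃ n : ℕ, f '' (E ∩ ball (0:ℝ) n) := by
    rintro x ⟨t, ht, rfl⟩
    obtain ⟨n, hnt⟩ := exists_nat_gt |t|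
    exact mem_iUnion.2 ⟨n, ⟨t, ⟨ht, by simpa [Real.ball_eq_Ioo, abs_lt] using abs_lt.1 hnt⟩, rfl⟩⟩
  exact measure_mono_null hcover (measure_iUnion_null hn)

/-- If a finite Borel measure on a metric space with full support is 1-rectifiable
(covered a.e. by countably many Lipschitz images of subsets of ℝ), then its lower
1-density is positive almost everywhere. -/
theorem stmt_0 {X : Type*} [MetricSpace X] [MeasurableSpace X] [BorelSpace X]
    (μ : Measure X) [IsFiniteMeasure μ]
    (hsupp : ∀ (x : X) (r : ℝ), 0 < r → 0 < μ (ball x r))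
    (f : ℕ → ℝ → X) (A : ℕ → Set ℝ) (L : ℕ → NNReal)
    (hf : ∀ i, LipschitzOnWith (L i) (f i) (A i))
    (hcov : μ (univ \ ⋃ i, f i '' A i) = 0) :
    ∀ᵐ x ∂μ,
      0 < liminf (fun r : ℝ => μ (ball x r) / ENNReal.ofReal r) (nhdsWithin 0 (Ioi 0)) := by
  rw [ae_iff]
  set Z := {x : X | ¬ 0 < liminf (fun r : ℝ => μ (ball x r) / ENNReal.ofReal r)
    (nhdsWithin 0 (Ioi 0))} with hZdef
  have hZ0 : ∀ x ∈ Z, liminf (fun r : ℝ => μ (ball x r) / ENNReal.ofReal r)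
      (nhdsWithin 0 (Ioi 0)) = 0 := fun x hx => nonpos_iff_eq_zero.1 (not_lt.1 hx)
  have hsub : Z ⊆ (univ \ ⋃ i, f i '' A i) ∪ ⋃ i, f i '' {t ∈ A i | f i t ∈ Z} := by
    intro x hx
    by_cases hxU : x ∈ ⋃ i, f i '' A i
    · right
      obtain ⟨i, hi⟩ := mem_iUnion.1 hxU
      obtain ⟨t, ht, rfl⟩ := hi
      exact mem_iUnion.2 ⟨i, ⟨t, ⟨ht, hx⟩, rfl⟩⟩
    · exact Or.inl ⟨mem_univ x, hxU⟩
  have hkey : ∀ i, μ (f i '' {t ∈ A i | f i t ∈ Z}) = 0 := by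
    intro i
    refine key_zero_image μ (f i) (A i) ((L i : ℝ) + 1) (by positivity) ?_ _
      (fun t ht => ht.1) (fun t ht => hZ0 _ ht.2)
    intro s hs t ht
    calc dist (f i s) (f i t) ≤ (L i : ℝ) * dist s t := (hf i).dist_le_mul s hs t ht
      _ ≤ ((L i : ℝ) + 1) * dist s t := by
          have := dist_nonneg (x := s) (y := t); nlinarith
  refine le_antisymm ?_ zero_le
  calc μ Z ≤ μ ((univ \ ⋃ i, f i '' A i) ∪ ⋃ i, f i '' {t ∈ A i | f i t ∈ Z}) :=
        measure_mono hsub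
    _ ≤ μ (univ \ ⋃ i, f i '' A i) + μ (⋃ i, f i '' {t ∈ A i | f i t ∈ Z}) :=
        measure_union_le _ _
    _ ≤ 0 + 0 := by
        rw [hcov, measure_iUnion_null hkey]
    _ = 0 := by simp
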